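/- In a unique guarded fixpoint category (C, ▷), the dagger satisfies the double dagger identity: for every f : ▷X × ▷X × Y → X, f†† = (f ∘ (Δ_{▷X} × id_Y))†, where Δ_{▷X} : ▷X → ▷X × ▷X is the diagonal. -/

import Mathlib

open CategoryTheory CategoryTheory.Limits

/-- In a unique guarded fixpoint category `(C, ▷)`, the dagger satisfies the double dagger
identity: for `f : ▷X × (▷X × Y) → X`, `f†† = (f ∘ (Δ_{▷X} × id_Y))†` (where
`Δ × id`, modulo associativity, is `⟨π_ℓ, id⟩ : ▷X × Y → ▷X × (▷X × Y)`). -/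
theorem stmt7 {C : Type*} [Category C] [HasFiniteProducts C]
    (F : C ⥤ C) (p : 𝟭 C ⟶ F)
    (dag : ∀ {X Y : C}, (F.obj X ⨯ Y ⟶ X) → (Y ⟶ X))
    (hfix : ∀ {X Y : C} (f : F.obj X ⨯ Y ⟶ X),
      dag f = prod.lift (dag f) (𝟙 Y) ≫ prod.map (p.app X) (𝟙 Y) ≫ f)
    (huniq : ∀ {X Y : C} (f : F.obj X ⨯ Y ⟶ X) (s : Y ⟶ X),
      s = prod.lift s (𝟙 Y) ≫ prod.map (p.app X) (𝟙 Y) ≫ f → s = dag f) :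
    ∀ {X Y : C} (f : F.obj X ⨯ (F.obj X ⨯ Y) ⟶ X),
      dag (dag f) =
        dag (prod.lift (prod.fst : F.obj X ⨯ Y ⟶ F.obj X) (𝟙 (F.obj X ⨯ Y)) ≫ f) := by
  intro X Y f
  apply huniq
  have key : dag (dag f)
      = prod.lift (dag (dag f) ≫ p.app X) (𝟙 Y) ≫ dag f := by
    conv_lhs => rw [hfix (dag f)]
    simp [prod.lift_map]
  calc dag (dag f) = prod.lift (dag (dag f) ≫ p.app X) (𝟙 Y) ≫ dag f := key
    _ = prod.lift (dag (dag f) ≫ p.app X) (𝟙 Y) ≫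
          prod.lift (dag f) (𝟙 _) ≫ prod.map (p.app X) (𝟙 _) ≫ f := by
        rw [← hfix f]
    _ = prod.lift ((prod.lift (dag (dag f) ≫ p.app X) (𝟙 Y) ≫ dag f) ≫ p.app X)
          (prod.lift (dag (dag f) ≫ p.app X) (𝟙 Y)) ≫ f := by
        simp [prod.comp_lift_assoc]
    _ = prod.lift (dag (dag f) ≫ p.app X)
          (prod.lift (dag (dag f) ≫ p.app X) (𝟙 Y)) ≫ f := by rw [← key]
    _ = prod.lift (dag (dag f)) (𝟙 Y) ≫ prod.map (p.app X) (𝟙 _) ≫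
          prod.lift prod.fst (𝟙 _) ≫ f := by
        simp [prod.comp_lift_assoc, prod.lift_map, prod.lift_fst_assoc]
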